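/- Let k be a countable field and R = k[x,y] the polynomial ring in two variables. Then the canonical ring homomorphism R → lim_{𝔞 ≠ 0} R/𝔞, into the inverse limit of R/𝔞 over all nonzero ideals 𝔞 of R, is injective but not surjective. -/

import Mathlib

/-- A family of elements of the quotients `R ⧸ 𝔞`, indexed by the nonzero ideals `𝔞`
of `R`, is compatible if it commutes with the natural quotient (transition) maps.
Such families are exactly the elements of the inverse limit `lim_{𝔞 ≠ 0} R ⧸ 𝔞`. -/
def IsCompatibleFamily {R : Type*} [CommRing R]
    (x : ∀ a : {a : Ideal R // a ≠ ⊥}, R ⧸ a.1) : Prop :=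
  ∀ (a b : {a : Ideal R // a ≠ ⊥}) (h : a.1 ≤ b.1),
    Ideal.Quotient.factor (S := a.1) (T := b.1) h (x a) = x b

section Aux

open MvPolynomial

variable {k : Type*} [Field k]

lemma not_isUnit_X0 : ¬ IsUnit (X 0 : MvPolynomial (Fin 2) k) := by
  intro h
  obtain ⟨u, hu⟩ := h.exists_right_inv
  have := congrArg (MvPolynomial.constantCoeff) hu
  simp at this

/-- The running products `g n`, cofinal among nonzero principal ideals. -/
noncomputable def gseq (f : ℕ → MvPolynomial (Fin 2) k) : ℕ → MvPolynomial (Fin 2) k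
  | 0 => f 0
  | n + 1 => gseq f n * (f (n + 1) * X 0)

open scoped Classical in
/-- The diagonal sequence of approximations. -/
noncomputable def rseq (f s : ℕ → MvPolynomial (Fin 2) k) : ℕ → MvPolynomial (Fin 2) k
  | 0 => 0
  | n + 1 =>
    if gseq f (n + 1) ∣ (rseq f s n - s n) then rseq f s n + gseq f n else rseq f s n

variable {f s : ℕ → MvPolynomial (Fin 2) k}

lemma gseq_ne_zero (hf : ∀ n, f n ≠ 0) : ∀ n, gseq f n ≠ 0
  | 0 => hf 0
  | n + 1 => by
    simp only [gseq]
    exact mul_ne_zero (gseq_ne_zero hf n) (mul_ne_zero (hf (n + 1)) (X_ne_zero 0))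

lemma gseq_dvd_gseq {n m : ℕ} (h : n ≤ m) : gseq f n ∣ gseq f m := by
  induction m, h using Nat.le_induction with
  | base => rfl
  | succ m _ ih => exact ih.trans (Dvd.intro _ rfl)

lemma gseq_succ (n : ℕ) : gseq f (n + 1) = gseq f n * (f (n + 1) * MvPolynomial.X 0) :=
  rfl

lemma fseq_dvd_gseq (n : ℕ) : f n ∣ gseq f n := by
  cases n with
  | zero => rfl
  | succ n => exact ⟨gseq f n * X 0, by rw [gseq_succ]; ring⟩

lemma not_gseq_succ_dvd_gseq (hf : ∀ n, f n ≠ 0) (n : ℕ) :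
    ¬ gseq f (n + 1) ∣ gseq f n := by
  rintro ⟨q, hq⟩
  have h0 : gseq f n ≠ 0 := gseq_ne_zero hf n
  have : gseq f n * 1 = gseq f n * ((f (n + 1) * X 0) * q) := by
    rw [mul_one]
    calc gseq f n = gseq f (n + 1) * q := hq
    _ = gseq f n * (f (n + 1) * X 0 * q) := by rw [gseq_succ]; ring
  have h1 : (1 : MvPolynomial (Fin 2) k) = (f (n + 1) * X 0) * q :=
    mul_left_cancel₀ h0 this
  exact not_isUnit_X0 (IsUnit.of_mul_eq_one (f (n + 1) * q)
    (by linear_combination h1.symm))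

lemma gseq_dvd_rseq_step (n : ℕ) : gseq f n ∣ rseq f s (n + 1) - rseq f s n := by
  classical
  rw [rseq]
  split
  · simp
  · simp

lemma gseq_dvd_rseq_sub {n m : ℕ} (h : n ≤ m) :
    gseq f n ∣ rseq f s m - rseq f s n := by
  induction m, h using Nat.le_induction with
  | base => simp
  | succ m hm ih =>
    have h1 : gseq f n ∣ rseq f s (m + 1) - rseq f s m :=
      (gseq_dvd_gseq hm).trans (gseq_dvd_rseq_step m)
    have := dvd_add h1 ih
    simpa using this

lemma rseq_diag (hf : ∀ n, f n ≠ 0) (n : ℕ) :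
    ¬ gseq f (n + 1) ∣ (rseq f s (n + 1) - s n) := by
  classical
  rw [rseq]
  split
  · rename_i h
    intro hcon
    have : gseq f (n + 1) ∣ gseq f n := by
      have := dvd_sub hcon h
      simpa using this
    exact not_gseq_succ_dvd_gseq hf n this
  · rename_i h
    exact h

end Aux

/-- For `R = k[x,y]` with `k` a countable field, the canonical map
`R → lim_{𝔞 ≠ 0} R ⧸ 𝔞` is injective but not surjective onto the inverse limit
(the set of compatible families). -/
theorem canonical_map_injective_not_surjective_of_countable
    (k : Type*) [Field k] [Countable k] :
    Function.Injective
        (fun (r : MvPolynomial (Fin 2) k)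
            (a : {a : Ideal (MvPolynomial (Fin 2) k) // a ≠ ⊥}) =>
          Ideal.Quotient.mk a.1 r) ∧
      ¬ ∀ x : ∀ a : {a : Ideal (MvPolynomial (Fin 2) k) // a ≠ ⊥},
            MvPolynomial (Fin 2) k ⧸ a.1,
          IsCompatibleFamily x →
            ∃ r : MvPolynomial (Fin 2) k, ∀ a, Ideal.Quotient.mk a.1 r = x a := by
  classical
  set R := MvPolynomial (Fin 2) k
  constructor
  · -- Injectivity
    intro r r' hrr'
    by_contra hne
    have ht : r - r' ≠ 0 := sub_ne_zero.mpr hne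
    have hmem : ∀ a : {a : Ideal R // a ≠ ⊥}, r - r' ∈ a.1 := by
      intro a
      have := congrFun hrr' a
      exact Ideal.Quotient.eq.mp this
    -- from the ideal ((r-r')²): r - r' is a unit
    have h1 : r - r' ∈ Ideal.span {(r - r') * (r - r')} :=
      hmem ⟨Ideal.span {(r - r') * (r - r')}, by
        simp [Ideal.span_singleton_eq_bot, mul_ne_zero ht ht]⟩
    obtain ⟨c, hc⟩ := Ideal.mem_span_singleton.mp h1
    have hunit : IsUnit (r - r') := by
      have : (r - r') * 1 = (r - r') * ((r - r') * c) := by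
        rw [mul_one]; linear_combination hc
      exact IsUnit.of_mul_eq_one _ (mul_left_cancel₀ ht this).symm
    -- from the ideal (X 0): X 0 divides the unit r - r'
    have h2 : r - r' ∈ Ideal.span {(MvPolynomial.X 0 : R)} :=
      hmem ⟨Ideal.span {MvPolynomial.X 0}, by
        rw [Ne, Ideal.span_singleton_eq_bot]; exact MvPolynomial.X_ne_zero 0⟩
    obtain ⟨d, hd⟩ := Ideal.mem_span_singleton.mp h2
    rw [hd] at hunit
    exact not_isUnit_X0 (isUnit_of_mul_isUnit_left hunit)
  · -- Non-surjectivity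
    intro hsurj
    haveI : Countable R := by
      unfold R MvPolynomial
      exact Function.Injective.countable (f := fun p : AddMonoidAlgebra k (Fin 2 →₀ ℕ) => p.coeff)
        (fun p q h => by cases p; cases q; cases h; rfl)
    obtain ⟨e, he⟩ := exists_surjective_nat R
    set f : ℕ → R := fun n => if e n = 0 then 1 else e n with hf_def
    have hf : ∀ n, f n ≠ 0 := by
      intro n
      simp only [hf_def]
      split <;> simp [*]
    -- cofinality of the `(gseq f n)`
    have hcof : ∀ a : {a : Ideal R // a ≠ ⊥}, ∃ n, gseq f n ∈ a.1 := by
      intro a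
      obtain ⟨h, hmem, hne⟩ := Submodule.exists_mem_ne_zero_of_ne_bot a.2
      obtain ⟨i, hi⟩ := he h
      have hfi : f i = h := by simp [hf_def, hi, hne]
      obtain ⟨q, hq⟩ := fseq_dvd_gseq (f := f) i
      exact ⟨i, hq ▸ (hfi ▸ Ideal.mul_mem_right q a.1 hmem)⟩
    set r : ℕ → R := rseq f e with hr_def
    set N : {a : Ideal R // a ≠ ⊥} → ℕ := fun a => Nat.find (hcof a) with hN_def
    have hNmem : ∀ a, gseq f (N a) ∈ a.1 := fun a => Nat.find_spec (hcof a)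
    set x : ∀ a : {a : Ideal R // a ≠ ⊥}, R ⧸ a.1 :=
      fun a => Ideal.Quotient.mk a.1 (r (N a)) with hx_def
    -- the key well-definedness statement
    have hkey : ∀ (a : {a : Ideal R // a ≠ ⊥}) (n : ℕ), gseq f n ∈ a.1 →
        r n - r (N a) ∈ a.1 := by
      intro a n hn
      set m := max n (N a)
      have h1 : r m - r n ∈ a.1 := by
        obtain ⟨q, hq⟩ := gseq_dvd_rseq_sub (f := f) (s := e) (le_max_left n (N a))
        exact hq ▸ Ideal.mul_mem_right q a.1 hn
      have h2 : r m - r (N a) ∈ a.1 := by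
        obtain ⟨q, hq⟩ := gseq_dvd_rseq_sub (f := f) (s := e) (le_max_right n (N a))
        exact hq ▸ Ideal.mul_mem_right q a.1 (hNmem a)
      have := Ideal.sub_mem a.1 h2 h1
      simpa using this
    have hcomp : IsCompatibleFamily x := by
      intro a b hab
      simp only [hx_def, Ideal.Quotient.factor_mk]
      rw [Ideal.Quotient.eq]
      exact hkey b (N a) (hab (hNmem a))
    obtain ⟨p, hp⟩ := hsurj x hcomp
    obtain ⟨i, hi⟩ := he p
    -- consider the ideal (gseq f (i+1))
    set a : {a : Ideal R // a ≠ ⊥} :=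
      ⟨Ideal.span {gseq f (i + 1)}, by
        simp [Ideal.span_singleton_eq_bot, gseq_ne_zero hf (i + 1)]⟩
    have h1 : p - r (N a) ∈ a.1 := Ideal.Quotient.eq.mp (hp a)
    have h2 : r (i + 1) - r (N a) ∈ a.1 :=
      hkey a (i + 1) (Ideal.subset_span rfl)
    have h3 : p - r (i + 1) ∈ a.1 := by
      have := Ideal.sub_mem a.1 h1 h2
      simpa using this
    have h4 : gseq f (i + 1) ∣ (r (i + 1) - e i) := by
      have hd : gseq f (i + 1) ∣ (p - r (i + 1)) := Ideal.mem_span_singleton.mp h3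
      have := hd.neg_right
      rw [neg_sub] at this
      have := this
      calc gseq f (i + 1) ∣ (r (i + 1) - p) := this
      _ = r (i + 1) - e i := by rw [hi]
    exact rseq_diag hf i h4
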